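/- For positive integers m < n and integer κ ≥ 2 and real k_f ∉ ℤ with k_g = κ - k_f, the hypergeometric identity holds: ₂F₁(1, k_g, κ; 1 - m/n) = ((κ-1)/(k_f-1)) (1 - m/n)^{1-κ} ₂F₁(1-k_f, 2-κ, 2-k_f; m/n) + (Γ(κ)Γ(1-k_f)/Γ(k_g)) (1 - m/n)^{1-κ} (m/n)^{k_f-1}. -/

import Mathlib

open Finset Filter Topology Metric

set_option maxHeartbeats 1000000


/-- The Gauss hypergeometric function `₂F₁(a,b,c;x) = ∑_{n≥0} (a)_n (b)_n / ((c)_n n!) xⁿ`. -/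
noncomputable def hyp2F1 (a b c x : ℝ) : ℝ :=
  ∑' n : ℕ, ((ascPochhammer ℝ n).eval a * (ascPochhammer ℝ n).eval b /
    ((ascPochhammer ℝ n).eval c * (n.factorial : ℝ))) * x ^ n

lemma poch_prod (j : ℕ) (a : ℝ) :
    (ascPochhammer ℝ j).eval a = ∏ i ∈ Finset.range j, (a + i) := by
  induction j with
  | zero => simp
  | succ j ih => rw [ascPochhammer_succ_eval, ih, Finset.prod_range_succ]

lemma poch_ne_zero {a : ℝ} (j : ℕ) (ha : ∀ i : ℕ, a + i ≠ 0) :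
    (ascPochhammer ℝ j).eval a ≠ 0 := by
  rw [poch_prod]
  exact Finset.prod_ne_zero_iff.2 fun i _ => ha i

lemma poch_eq_zero {a : ℝ} {j i : ℕ} (hi : i < j) (ha : a + i = 0) :
    (ascPochhammer ℝ j).eval a = 0 := by
  rw [poch_prod]
  exact Finset.prod_eq_zero (Finset.mem_range.2 hi) ha

lemma poch_succ_right (j : ℕ) (a : ℝ) :
    (ascPochhammer ℝ (j+1)).eval a = (ascPochhammer ℝ j).eval a * (a + j) :=
  ascPochhammer_succ_eval j a

lemma poch_succ_left (j : ℕ) (a : ℝ) :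
    (ascPochhammer ℝ (j+1)).eval a = a * (ascPochhammer ℝ j).eval (a + 1) := by
  rw [poch_prod, poch_prod, Finset.prod_range_succ']
  simp [mul_comm, add_comm, add_assoc, add_left_comm]

lemma poch_two (j : ℕ) : (ascPochhammer ℝ j).eval 2 = ((j+1).factorial : ℝ) := by
  have h := factorial_mul_ascPochhammer ℝ 1 j
  norm_num at h
  rw [h, Nat.add_comm]

lemma poch_neg_nat (N : ℕ) : ∀ j : ℕ, (ascPochhammer ℝ j).eval (-(N:ℝ))
    = (-1)^j * (N.descFactorial j : ℝ) := by
  intro j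
  induction j with
  | zero => simp
  | succ j ih =>
    rw [poch_succ_right, ih, Nat.descFactorial_succ, Nat.cast_mul]
    by_cases h : j < N
    · rw [Nat.cast_sub h.le]
      ring
    · have hNj : N ≤ j := not_lt.1 h
      have h2 : N - j = 0 := by omega
      rw [h2]
      rcases eq_or_lt_of_le hNj with rfl | hlt
      · simp
      · simp [Nat.descFactorial_eq_zero_iff_lt.2 hlt]

noncomputable def hterm (a b c z : ℝ) (j : ℕ) : ℝ :=
  ((ascPochhammer ℝ j).eval a * (ascPochhammer ℝ j).eval b /
    ((ascPochhammer ℝ j).eval c * (j.factorial : ℝ))) * z ^ j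

lemma tend1 (p q : ℝ) : Tendsto (fun j : ℕ => (p + j)/(q + j)) atTop (𝓝 1) := by
  have h0 : Tendsto (fun j : ℕ => (q : ℝ) + j) atTop atTop :=
    tendsto_atTop_add_const_left _ _ tendsto_natCast_atTop_atTop
  have h1 : Tendsto (fun j : ℕ => (p - q)/(q + j)) atTop (𝓝 0) :=
    Tendsto.div_atTop tendsto_const_nhds h0
  have h2 : Tendsto (fun j : ℕ => 1 + (p - q)/(q + j)) atTop (𝓝 1) := by
    simpa using tendsto_const_nhds.add h1
  apply h2.congr'
  filter_upwards [h0.eventually_gt_atTop 0] with j hj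
  field_simp
  ring

lemma hterm_succ (a b c z : ℝ) (j : ℕ) (hc : ∀ i : ℕ, c + i ≠ 0) :
    hterm a b c z (j+1) = hterm a b c z j * ((a+j)*(b+j)/((c+j)*(j+1)) * z) := by
  have hcj : (ascPochhammer ℝ j).eval c ≠ 0 := poch_ne_zero j hc
  have hfj : (j.factorial : ℝ) ≠ 0 := Nat.cast_ne_zero.2 j.factorial_ne_zero
  have h1 : (c + j) ≠ 0 := hc j
  have h2 : ((j:ℝ)+1) ≠ 0 := by positivity
  simp only [hterm, poch_succ_right, Nat.factorial_succ, pow_succ, Nat.cast_mul, Nat.cast_add,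
    Nat.cast_one]
  field_simp

lemma hterm_ne_zero {a b c z : ℝ} (j : ℕ) (ha : ∀ i : ℕ, a + i ≠ 0)
    (hb : ∀ i : ℕ, b + i ≠ 0) (hc : ∀ i : ℕ, c + i ≠ 0) (hz0 : z ≠ 0) :
    hterm a b c z j ≠ 0 := by
  have hcj : (ascPochhammer ℝ j).eval c ≠ 0 := poch_ne_zero j hc
  have hfj : (j.factorial : ℝ) ≠ 0 := Nat.cast_ne_zero.2 j.factorial_ne_zero
  exact mul_ne_zero (div_ne_zero (mul_ne_zero (poch_ne_zero j ha) (poch_ne_zero j hb))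
    (mul_ne_zero hcj hfj)) (pow_ne_zero _ hz0)

lemma hyp_summable {a b c z : ℝ} (ha : ∀ i : ℕ, a + i ≠ 0) (hb : ∀ i : ℕ, b + i ≠ 0)
    (hc : ∀ i : ℕ, c + i ≠ 0) (hz0 : z ≠ 0) (hz : |z| < 1) :
    Summable (hterm a b c z) := by
  apply summable_of_ratio_test_tendsto_lt_one hz
  · exact Filter.Eventually.of_forall fun j => hterm_ne_zero j ha hb hc hz0
  · have key : ∀ j : ℕ, ‖hterm a b c z (j+1)‖ / ‖hterm a b c z j‖
        = |(a+j)/(c+j) * ((b+j)/(1+j)) * z| := by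
      intro j
      have hn : ‖hterm a b c z j‖ ≠ 0 :=
        norm_ne_zero_iff.2 (hterm_ne_zero j ha hb hc hz0)
      rw [hterm_succ a b c z j hc, norm_mul, mul_comm, mul_div_assoc, div_self hn, mul_one,
        Real.norm_eq_abs]
      congr 1
      rw [div_mul_div_comm, add_comm (1:ℝ) (j:ℝ)]
    have T : Tendsto (fun j : ℕ => (a+j)/(c+j) * ((b+j)/(1+j)) * z) atTop (𝓝 z) := by
      have := ((tend1 a c).mul (tend1 b 1)).mul_const z
      simpa using this
    exact Tendsto.congr (fun j => (key j).symm) T.abs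

noncomputable def bterm (a : ℝ) (i : ℕ) : ℝ := (ascPochhammer ℝ i).eval a / (i.factorial : ℝ)

lemma bterm_ne_zero {a : ℝ} (ha : ∀ i : ℕ, a + i ≠ 0) (i : ℕ) : bterm a i ≠ 0 :=
  div_ne_zero (poch_ne_zero i ha) (Nat.cast_ne_zero.2 i.factorial_ne_zero)

lemma bterm_succ (a : ℝ) (i : ℕ) : bterm a (i+1) * ((i:ℝ)+1) = bterm a i * (a + i) := by
  have h1 : ((i.factorial : ℝ)) ≠ 0 := Nat.cast_ne_zero.2 i.factorial_ne_zero
  have h2 : ((i:ℝ)+1) ≠ 0 := by positivity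
  simp only [bterm, poch_succ_right, Nat.factorial_succ, Nat.cast_mul, Nat.cast_add, Nat.cast_one]
  field_simp

lemma bterm_abs_succ (a : ℝ) (i : ℕ) :
    |bterm a (i+1)| = |bterm a i| * (|a + i| / ((i:ℝ)+1)) := by
  have h2 : (0:ℝ) < (i:ℝ)+1 := by positivity
  have := bterm_succ a i
  have h3 : bterm a (i+1) = bterm a i * (a+i) / ((i:ℝ)+1) := by
    field_simp at this ⊢
    linarith [this]
  rw [h3, abs_div, abs_mul, abs_of_pos h2, mul_div_assoc]

/-- summability of the binomial series -/
lemma bsummable {a : ℝ} (ha : ∀ i : ℕ, a + i ≠ 0) {y : ℝ} (hy : |y| < 1) :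
    Summable (fun i => bterm a i * y ^ i) := by
  by_cases hy0 : y = 0
  · subst hy0
    apply summable_of_ne_finset_zero (s := {0})
    intro i hi
    simp only [Finset.mem_singleton] at hi
    simp [zero_pow hi]
  · apply summable_of_ratio_test_tendsto_lt_one hy
    · exact Filter.Eventually.of_forall fun i =>
        mul_ne_zero (bterm_ne_zero ha i) (pow_ne_zero _ hy0)
    · have key : ∀ i : ℕ, ‖bterm a (i+1) * y^(i+1)‖ / ‖bterm a i * y^i‖
          = |(a+i)/(1+(i:ℝ)) * y| := by
        intro i
        have hn : ‖bterm a i * y^i‖ ≠ 0 := norm_ne_zero_iff.2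
          (mul_ne_zero (bterm_ne_zero ha i) (pow_ne_zero _ hy0))
        have : bterm a (i+1) * y^(i+1) = (bterm a i * y^i) * ((a+i)/(1+(i:ℝ)) * y) := by
          have h2 : ((i:ℝ)+1) ≠ 0 := by positivity
          have h2' : (1:ℝ)+(i:ℝ) ≠ 0 := by positivity
          have h3 : bterm a (i+1) = bterm a i * (a+i) / ((i:ℝ)+1) := by
            rw [eq_div_iff h2]
            exact bterm_succ a i
          rw [h3, pow_succ]
          field_simp
          ring
        rw [this, norm_mul, mul_comm, mul_div_assoc, div_self hn, mul_one, Real.norm_eq_abs]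
      have T : Tendsto (fun i : ℕ => (a+i)/(1+(i:ℝ)) * y) atTop (𝓝 y) := by
        simpa using (tend1 a 1).mul_const y
      exact Tendsto.congr (fun i => (key i).symm) T.abs

lemma bsummable_deriv {a : ℝ} (ha : ∀ i : ℕ, a + i ≠ 0) {r : ℝ} (hr0 : 0 < r) (hr1 : r < 1) :
    Summable (fun i : ℕ => |bterm a (i+1)| * ((i:ℝ)+1) * r ^ i) := by
  have hrabs : |r| < 1 := by rw [abs_of_pos hr0]; exact hr1
  apply summable_of_ratio_test_tendsto_lt_one hrabs
  · refine Filter.Eventually.of_forall fun i => ?_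
    have := bterm_ne_zero ha (i+1)
    positivity
  · have key : ∀ i : ℕ, ‖|bterm a (i+2)| * ((i:ℝ)+1+1) * r ^ (i+1)‖ /
        ‖|bterm a (i+1)| * ((i:ℝ)+1) * r ^ i‖ = |(a+1+(i:ℝ))/(1+(i:ℝ)) * r| := by
      intro i
      have hvi : |bterm a (i+1)| * ((i:ℝ)+1) * r ^ i ≠ 0 := by
        have := bterm_ne_zero ha (i+1)
        positivity
      have hn : ‖|bterm a (i+1)| * ((i:ℝ)+1) * r ^ i‖ ≠ 0 := norm_ne_zero_iff.2 hvi
      have step : |bterm a (i+2)| * ((i:ℝ)+1+1) * r ^ (i+1)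
          = (|bterm a (i+1)| * ((i:ℝ)+1) * r ^ i) * (|(a+1+(i:ℝ))/(1+(i:ℝ))| * r) := by
        have h1 : |bterm a (i+2)| = |bterm a (i+1)| * (|a + ((i:ℝ)+1)| / ((i:ℝ)+1+1)) := by
          have := bterm_abs_succ a (i+1)
          simpa [Nat.cast_add, Nat.cast_one] using this
        rw [h1, pow_succ]
        have h2 : (0:ℝ) < (i:ℝ)+1 := by positivity
        have h3 : (0:ℝ) < (i:ℝ)+1+1 := by positivity
        rw [abs_div, abs_of_pos (show (0:ℝ) < 1+(i:ℝ) by positivity)]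
        have h4 : |a + ((i:ℝ)+1)| = |a+1+(i:ℝ)| := by ring_nf
        rw [h4]
        field_simp
        ring
      rw [step, norm_mul, mul_comm, mul_div_assoc, div_self hn, mul_one, Real.norm_eq_abs,
        abs_mul, abs_abs, abs_mul]
    have T : Tendsto (fun i : ℕ => |(a+1+(i:ℝ))/(1+(i:ℝ)) * r|) atTop (𝓝 |r|) := by
      have := ((tend1 (a+1) 1).mul_const r).abs
      simpa using this
    apply Tendsto.congr _ T
    intro i
    have := (key i).symm
    convert this using 3 <;> push_cast <;> rfl

lemma binom_tsum {a : ℝ} (ha : ∀ i : ℕ, a + i ≠ 0) {z : ℝ} (hz0 : 0 ≤ z) (hz1 : z < 1) :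
    ∑' i, bterm a i * z ^ i = (1-z) ^ (-a) := by
  set r : ℝ := (1+z)/2 with hrdef
  have hzr : z < r := by rw [hrdef]; linarith
  have hr0 : 0 < r := by rw [hrdef]; linarith
  have hr1 : r < 1 := by rw [hrdef]; linarith
  set t : Set ℝ := Metric.ball (0:ℝ) r with htdef
  have hto : IsOpen t := isOpen_ball
  have htc : Convex ℝ t := convex_ball 0 r
  have habs : ∀ y ∈ t, |y| < r := by
    intro y hy
    simpa [htdef, Real.dist_eq] using hy
  have h0t : (0:ℝ) ∈ t := by simp [htdef, hr0]
  have hzt : z ∈ t := by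
    simp only [htdef, Metric.mem_ball, Real.dist_eq, sub_zero]
    rw [abs_of_nonneg hz0]; exact hzr
  -- the bounding sequence
  set u : ℕ → ℝ := fun i => Nat.casesOn i 0 (fun i => |bterm a (i+1)| * ((i:ℝ)+1) * r ^ i)
    with hudef
  have hu : Summable u := by
    apply (summable_nat_add_iff 1).1
    simpa [hudef] using bsummable_deriv ha hr0 hr1
  set g : ℕ → ℝ → ℝ := fun i y => bterm a i * y ^ i with hgdef
  set g' : ℕ → ℝ → ℝ := fun i y => bterm a i * ((i:ℝ) * y ^ (i-1)) with hg'def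
  have hg : ∀ i (y : ℝ), y ∈ t → HasDerivAt (g i) (g' i y) y := fun i y _ =>
    (hasDerivAt_pow i y).const_mul _
  have hbound : ∀ i (y : ℝ), y ∈ t → ‖g' i y‖ ≤ u i := by
    intro i y hy
    cases i with
    | zero => simp [hg'def, hudef]
    | succ i =>
      simp only [hg'def, hudef, Real.norm_eq_abs, Nat.add_sub_cancel, Nat.cast_add, Nat.cast_one]
      rw [abs_mul, abs_mul]
      have h1 : |((i:ℝ)+1)| = (i:ℝ)+1 := abs_of_pos (by positivity)
      rw [h1, abs_pow, ← mul_assoc]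
      have h2 : |y| ^ i ≤ r ^ i := pow_le_pow_left₀ (abs_nonneg y) (habs y hy).le i
      have h3 : 0 ≤ |bterm a (i+1)| * ((i:ℝ)+1) := by positivity
      exact mul_le_mul_of_nonneg_left h2 h3
  have hg0 : Summable (fun i => g i 0) := bsummable ha (by norm_num)
  have hF : ∀ y ∈ t, HasDerivAt (fun w => ∑' i, g i w) (∑' i, g' i y) y := fun y hy =>
    hasDerivAt_tsum_of_isPreconnected hu hto htc.isPreconnected hg hbound h0t hg0 hy
  -- the functional identity (1-y) * D y = a * F y on t
  have hDsum : ∀ y ∈ t, Summable (fun i => g' i y) := fun y hy =>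
    Summable.of_norm_bounded hu (fun i => hbound i y hy)
  have hFsum : ∀ y ∈ t, Summable (fun i => g i y) := by
    intro y hy
    exact bsummable ha ((habs y hy).trans hr1)
  have key : ∀ y ∈ t, (1-y) * (∑' i, g' i y) = a * (∑' i, g i y) := by
    intro y hy
    have hw : Summable (fun i => bterm a i * (i:ℝ) * y ^ i) := by
      have := (hDsum y hy).mul_left y
      apply this.congr
      intro i
      cases i with
      | zero => simp [hg'def]
      | succ i =>
        simp only [hg'def, Nat.add_sub_cancel]
        push_cast
        ring
    have hw' : Summable (fun i => bterm a (i+1) * ((i:ℝ)+1) * y ^ (i+1)) := by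
      have := (summable_nat_add_iff 1).2 hw
      apply this.congr
      intro i
      push_cast
      ring
    have hA : Summable (fun i => a * (bterm a i * y ^ i)) := (hFsum y hy).mul_left a
    -- drop the zero-th term of D
    have hD0 : (∑' i, g' i y) = ∑' i, g' (i+1) y := by
      rw [Summable.tsum_eq_zero_add (hDsum y hy)]
      simp [hg'def]
    have e_eq : ∀ i : ℕ, (1-y) * g' (i+1) y
        = a * (bterm a i * y ^ i) + (bterm a i * (i:ℝ) * y ^ i
          - bterm a (i+1) * ((i:ℝ)+1) * y ^ (i+1)) := by
      intro i
      have hb := bterm_succ a i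
      simp only [hg'def, Nat.add_sub_cancel]
      have expand : (1-y) * (bterm a (i+1) * (((i:ℝ)+1) * y ^ i))
          = bterm a (i+1) * ((i:ℝ)+1) * y ^ i - bterm a (i+1) * ((i:ℝ)+1) * y ^ (i+1) := by
        rw [pow_succ]; ring
      push_cast
      rw [expand, hb]
      ring
    calc (1-y) * (∑' i, g' i y) = ∑' i, (1-y) * g' (i+1) y := by
          rw [hD0, ← tsum_mul_left]
      _ = ∑' i, (a * (bterm a i * y ^ i) + (bterm a i * (i:ℝ) * y ^ i
            - bterm a (i+1) * ((i:ℝ)+1) * y ^ (i+1))) := by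
          exact tsum_congr e_eq
      _ = a * (∑' i, g i y) := by
          rw [Summable.tsum_add hA (hw.sub hw')]
          rw [Summable.tsum_sub hw hw']
          have hshift : ∑' i, bterm a (i+1) * ((i:ℝ)+1) * y ^ (i+1)
              = ∑' i, bterm a i * (i:ℝ) * y ^ i := by
            rw [Summable.tsum_eq_zero_add hw]
            simp only [Nat.cast_zero, mul_zero, zero_mul, zero_add, Nat.cast_add, Nat.cast_one]
          rw [hshift, sub_self, add_zero, ← tsum_mul_left]
  -- the auxiliary function F y * (1-y)^a is constant on [0,z]
  set F : ℝ → ℝ := fun y => ∑' i, g i y with hFdef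
  set G : ℝ → ℝ := fun y => F y * (1-y) ^ a with hGdef
  have hGderiv : ∀ y ∈ t, HasDerivAt G 0 y := by
    intro y hy
    have hy1 : y < 1 := lt_of_le_of_lt (le_abs_self y) ((habs y hy).trans hr1)
    have h1y : (0:ℝ) < 1 - y := by linarith
    have hrp : HasDerivAt (fun w : ℝ => (1-w) ^ a) (-1 * a * (1-y) ^ (a-1)) y := by
      have hbase : HasDerivAt (fun w : ℝ => 1 - w) (-1) y := by
        simpa using (hasDerivAt_id y).const_sub 1
      exact hbase.rpow_const (Or.inl h1y.ne')
    have hmul := (hF y hy).mul hrp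
    have hzero : (∑' i, g' i y) * (1-y) ^ a + F y * (-1 * a * (1-y) ^ (a-1)) = 0 := by
      have hsplit : (1-y) ^ a = (1-y) ^ (a-1) * (1-y) := by
        rw [← Real.rpow_add_one h1y.ne' (a-1)]
        ring_nf
      have hk := key y hy
      have hFy : F y = ∑' i, g i y := rfl
      rw [hsplit, hFy]
      linear_combination ((1:ℝ)-y) ^ (a-1) * hk
    rw [← hzero]
    exact hmul
  have hconst : G z = G 0 := by
    have hsub : Set.Icc (0:ℝ) z ⊆ t := by
      intro w hw
      simp only [htdef, Metric.mem_ball, Real.dist_eq, sub_zero]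
      rw [abs_of_nonneg hw.1]
      exact lt_of_le_of_lt hw.2 hzr
    have hc : ContinuousOn G (Set.Icc 0 z) := fun w hw =>
      ((hGderiv w (hsub hw)).continuousAt).continuousWithinAt
    have hd : ∀ w ∈ Set.Ico (0:ℝ) z, HasDerivWithinAt G 0 (Set.Ici w) w := fun w hw =>
      (hGderiv w (hsub (Set.Ico_subset_Icc_self hw))).hasDerivWithinAt
    exact constant_of_has_deriv_right_zero hc hd z (Set.right_mem_Icc.2 hz0)
  have hG0 : G 0 = 1 := by
    simp only [hGdef, hFdef]
    rw [show (1:ℝ) - 0 = 1 by ring, Real.one_rpow, mul_one]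
    rw [tsum_eq_single 0 (fun i hi => by simp [hgdef, zero_pow hi])]
    simp [hgdef, bterm]
  have hpow_ne : (1-z) ^ a ≠ 0 := (Real.rpow_pos_of_pos (by linarith) a).ne'
  have : F z * (1-z) ^ a = 1 := hconst.trans hG0
  have hFz : F z = ((1-z) ^ a)⁻¹ := by
    field_simp at this ⊢
    linarith [this]
  rw [show (∑' i, bterm a i * z ^ i) = F z from rfl, hFz, ← Real.rpow_neg (by linarith)]

lemma hyp2F1_eq_tsum (a b c x : ℝ) : hyp2F1 a b c x = ∑' j, hterm a b c x j := rfl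

lemma hyp_shift {b c z : ℝ} (hb : ∀ i : ℕ, b + i ≠ 0) (hc : 0 < c) (hz0 : 0 < z)
    (hz1 : z < 1) : hyp2F1 1 b c z = 1 + (b * z / c) * hyp2F1 1 (b+1) (c+1) z := by
  have hcc : ∀ i : ℕ, c + i ≠ 0 := fun i => by positivity
  have hcc1 : ∀ i : ℕ, (c+1) + i ≠ 0 := fun i => by positivity
  have hb1 : ∀ i : ℕ, (b+1) + i ≠ 0 := fun i => by
    have h := hb (i+1)
    push_cast at h
    intro hcontra
    apply h
    linarith
  have h1 : ∀ i : ℕ, (1:ℝ) + i ≠ 0 := fun i => by positivity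
  have hzne : z ≠ 0 := hz0.ne'
  have hza : |z| < 1 := by rw [abs_of_pos hz0]; exact hz1
  have hs1 : Summable (hterm 1 b c z) := hyp_summable h1 hb hcc hzne hza
  have hs2 : Summable (hterm 1 (b+1) (c+1) z) := hyp_summable h1 hb1 hcc1 hzne hza
  rw [hyp2F1_eq_tsum, hyp2F1_eq_tsum, Summable.tsum_eq_zero_add hs1]
  congr 1
  · simp [hterm]
  · rw [← tsum_mul_left]
    apply tsum_congr
    intro j
    have e1 : (ascPochhammer ℝ (j+1)).eval (1:ℝ) = ((j+1).factorial : ℝ) :=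
      ascPochhammer_eval_one ℝ (j+1)
    have e2 := poch_succ_left j b
    have e3 := poch_succ_left j c
    have e4 : (ascPochhammer ℝ j).eval (1:ℝ) = (j.factorial : ℝ) := ascPochhammer_eval_one ℝ j
    have hcj : (ascPochhammer ℝ j).eval (c+1) ≠ 0 := poch_ne_zero j hcc1
    have hfj : (j.factorial : ℝ) ≠ 0 := Nat.cast_ne_zero.2 j.factorial_ne_zero
    have hfj1 : (((j+1).factorial : ℕ) : ℝ) ≠ 0 := Nat.cast_ne_zero.2 (j+1).factorial_ne_zero
    simp only [hterm, e1, e2, e3, e4]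
    rw [pow_succ, Nat.factorial_succ (j)]
    push_cast
    field_simp

lemma hyp_polysum (a c x : ℝ) (κ : ℕ) (hκ : 2 ≤ κ) :
    hyp2F1 a (2 - (κ:ℝ)) c x = ∑ j ∈ Finset.range (κ-1),
      ((ascPochhammer ℝ j).eval a * (ascPochhammer ℝ j).eval (2-(κ:ℝ)) /
        ((ascPochhammer ℝ j).eval c * (j.factorial : ℝ))) * x ^ j := by
  rw [hyp2F1]
  apply tsum_eq_sum
  intro j hj
  have hjge : κ - 1 ≤ j := by simpa using hj
  have hcast : (2 - (κ:ℝ)) + ((κ-2:ℕ):ℝ) = 0 := by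
    have : ((κ-2:ℕ):ℝ) = (κ:ℝ) - 2 := by
      push_cast [hκ]
      ring
    rw [this]; ring
  have hz := poch_eq_zero (show κ-2 < j by omega) hcast
  simp [hz]

lemma poch_rel (j : ℕ) (a : ℝ) :
    (ascPochhammer ℝ j).eval a * (a + j) = a * (ascPochhammer ℝ j).eval (a+1) := by
  rw [← poch_succ_right, poch_succ_left]

lemma poch_one_sub_nat (κ j : ℕ) (hκ : 1 ≤ κ) :
    (ascPochhammer ℝ j).eval (1 - (κ:ℝ))
      = (-1)^j * ((κ-1).choose j : ℝ) * (j.factorial : ℝ) := by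
  have h1 : (1 - (κ:ℝ)) = -(((κ-1:ℕ):ℝ)) := by
    push_cast [hκ]
    ring
  rw [h1, poch_neg_nat, Nat.descFactorial_eq_factorial_mul_choose]
  push_cast
  ring

lemma poly_rec {kf x : ℝ} (hkf : ∀ j : ℤ, kf ≠ j) (κ : ℕ) (hκ : 2 ≤ κ) :
    ((κ:ℝ) - kf) * hyp2F1 (1-kf) (2-((κ:ℝ)+1)) (2-kf) x
      = ((κ:ℝ) - 1) * hyp2F1 (1-kf) (2-(κ:ℝ)) (2-kf) x - (kf - 1) * (1-x)^(κ-1) := by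
  have hkf2 : ∀ i : ℕ, (2-kf) + i ≠ 0 := fun i h => hkf (2+i) (by push_cast; linarith)
  have hkf1 : (1:ℝ) - kf ≠ 0 := fun h => hkf 1 (by push_cast; linarith)
  have hκ1 : (1:ℝ) - (κ:ℝ) ≠ 0 := by
    have : (2:ℝ) ≤ (κ:ℝ) := by exact_mod_cast hκ
    linarith
  -- rewrite the two hypergeometric polynomials as finite sums over range κ
  have hcast : 2 - ((κ:ℝ)+1) = 2 - ((κ+1:ℕ):ℝ) := by push_cast; ring
  rw [hcast, hyp_polysum (1-kf) (2-kf) x (κ+1) (by omega), hyp_polysum (1-kf) (2-kf) x κ hκ]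
  have hrange : κ + 1 - 1 = κ := by omega
  rw [hrange]
  -- extend the second sum to range κ : the top term vanishes
  have htop : ((ascPochhammer ℝ (κ-1)).eval (1-kf) * (ascPochhammer ℝ (κ-1)).eval (2-(κ:ℝ)) /
      ((ascPochhammer ℝ (κ-1)).eval (2-kf) * ((κ-1).factorial : ℝ))) * x ^ (κ-1) = 0 := by
    have hz : (ascPochhammer ℝ (κ-1)).eval (2-(κ:ℝ)) = 0 := by
      apply poch_eq_zero (show κ-2 < κ-1 by omega)
      have : ((κ-2:ℕ):ℝ) = (κ:ℝ) - 2 := by push_cast [hκ]; ring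
      rw [this]; ring
    simp [hz]
  have hext : ∑ j ∈ Finset.range (κ-1),
      ((ascPochhammer ℝ j).eval (1-kf) * (ascPochhammer ℝ j).eval (2-(κ:ℝ)) /
        ((ascPochhammer ℝ j).eval (2-kf) * (j.factorial : ℝ))) * x ^ j
      = ∑ j ∈ Finset.range κ,
      ((ascPochhammer ℝ j).eval (1-kf) * (ascPochhammer ℝ j).eval (2-(κ:ℝ)) /
        ((ascPochhammer ℝ j).eval (2-kf) * (j.factorial : ℝ))) * x ^ j := by
    have h2 : Finset.range κ = Finset.range ((κ-1)+1) := by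
      rw [show (κ-1)+1 = κ by omega]
    rw [h2, Finset.sum_range_succ, htop, add_zero]
  rw [hext]
  -- binomial expansion of (1-x)^(κ-1)
  have hbin : (1-x)^(κ-1) = ∑ j ∈ Finset.range κ, (-x)^j * (((κ-1).choose j : ℕ) : ℝ) := by
    have := add_pow (-x) 1 (κ-1)
    rw [show -x + 1 = 1 - x by ring] at this
    rw [this, show κ-1+1 = κ by omega]
    apply Finset.sum_congr rfl
    intro j hj
    rw [one_pow]
    ring
  rw [hbin, Finset.mul_sum, Finset.mul_sum, Finset.mul_sum, ← Finset.sum_sub_distrib]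
  apply Finset.sum_congr rfl
  intro j hj
  have hjlt : j < κ := Finset.mem_range.1 hj
  -- abbreviations
  set p := (ascPochhammer ℝ j).eval (1-kf) with hp
  set q := (ascPochhammer ℝ j).eval (2-kf) with hq
  set r := (ascPochhammer ℝ j).eval (1-(κ:ℝ)) with hr
  set s := (ascPochhammer ℝ j).eval (2-(κ:ℝ)) with hs
  have hqne : q ≠ 0 := poch_ne_zero j hkf2
  have hfj : (j.factorial : ℝ) ≠ 0 := Nat.cast_ne_zero.2 j.factorial_ne_zero
  have R1 : r * ((1-(κ:ℝ)) + j) = (1-(κ:ℝ)) * s := by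
    have := poch_rel j (1-(κ:ℝ))
    rw [show (1-(κ:ℝ))+1 = 2-(κ:ℝ) by ring] at this
    exact this
  have R2 : p * ((1-kf) + j) = (1-kf) * q := by
    have := poch_rel j (1-kf)
    rw [show (1-kf)+1 = 2-kf by ring] at this
    exact this
  have hr3 : r = (-1)^j * ((κ-1).choose j : ℝ) * (j.factorial : ℝ) :=
    poch_one_sub_nat κ j (by omega)
  have key : ((κ:ℝ)-kf) * (p * r) = ((κ:ℝ)-1) * (p * s) - (kf-1) * (r * q) := by
    have hsv : s = r * ((1-(κ:ℝ)) + j) / (1-(κ:ℝ)) := by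
      rw [eq_div_iff hκ1]; linarith [R1]
    have hqv : q = p * ((1-kf) + j) / (1-kf) := by
      rw [eq_div_iff hkf1]; linarith [R2]
    rw [hsv, hqv]
    field_simp
    ring
  -- now the per-term identity
  have hrw : 2 - (((κ+1:ℕ)):ℝ) = 1 - (κ:ℝ) := by push_cast; ring
  rw [hrw]
  rw [show (-x)^j = (-1)^j * x^j by rw [neg_pow]]
  field_simp
  linear_combination (x^j) * key - ((kf-1) * q * x^j) * hr3

lemma claim_all {kf x : ℝ} (hkf : ∀ j : ℤ, kf ≠ j) (hx0 : 0 < x) (hx1 : x < 1) :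
    ∀ κ : ℕ, 2 ≤ κ →
    hyp2F1 1 ((κ:ℝ) - kf) (κ:ℝ) (1-x)
      = ((κ:ℝ) - 1)/(kf - 1) * (1-x) ^ ((1:ℝ) - (κ:ℝ)) * hyp2F1 (1-kf) (2-(κ:ℝ)) (2-kf) x
      + Real.Gamma (κ:ℝ) * Real.Gamma (1-kf) / Real.Gamma ((κ:ℝ)-kf)
          * (1-x) ^ ((1:ℝ)-(κ:ℝ)) * x ^ (kf-1) := by
  have hz0' : (0:ℝ) < 1-x := by linarith
  have hz1' : 1-x < 1 := by linarith
  have hzb : |1-x| < 1 := by rw [abs_of_pos hz0']; exact hz1'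
  have h1kf : ∀ i : ℕ, (1-kf) + i ≠ 0 := fun i h => hkf (1+(i:ℤ)) (by push_cast; linarith)
  have hkf1 : (1:ℝ)-kf ≠ 0 := by simpa using h1kf 0
  have hGne : Real.Gamma (1-kf) ≠ 0 :=
    Real.Gamma_ne_zero (fun m hm => hkf (1+(m:ℤ)) (by push_cast; linarith))
  suffices H : ∀ d : ℕ,
      hyp2F1 1 (((d+2:ℕ):ℝ) - kf) ((d+2:ℕ):ℝ) (1-x)
      = (((d+2:ℕ):ℝ) - 1)/(kf - 1) * (1-x) ^ ((1:ℝ) - ((d+2:ℕ):ℝ))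
          * hyp2F1 (1-kf) (2-((d+2:ℕ):ℝ)) (2-kf) x
      + Real.Gamma ((d+2:ℕ):ℝ) * Real.Gamma (1-kf) / Real.Gamma (((d+2:ℕ):ℝ)-kf)
          * (1-x) ^ ((1:ℝ)-((d+2:ℕ):ℝ)) * x ^ (kf-1) by
    intro κ hκ
    obtain ⟨d, rfl⟩ : ∃ d, κ = d+2 := ⟨κ-2, by omega⟩
    exact H d
  intro d
  induction d with
  | zero =>
    have h2 : ((0+2:ℕ):ℝ) = 2 := by norm_num
    rw [h2]
    have hSb : Summable (fun i => bterm (1-kf) i * (1-x)^i) := bsummable h1kf hzb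
    have hbin := binom_tsum h1kf hz0'.le hz1'
    rw [show (1:ℝ) - (1-x) = x by ring, show -(1-kf) = kf - 1 by ring] at hbin
    have hzero := Summable.tsum_eq_zero_add hSb
    have h0t : bterm (1-kf) 0 * (1-x)^0 = 1 := by simp [bterm]
    have hterm_eq : ∀ i : ℕ, bterm (1-kf) (i+1) * (1-x)^(i+1)
        = ((1-kf)*(1-x)) * hterm 1 (2-kf) 2 (1-x) i := by
      intro i
      have e4 := ascPochhammer_eval_one ℝ i
      have e2 := poch_two i
      have e5 := poch_succ_left i (1-kf)
      have hfi : (i.factorial:ℝ) ≠ 0 := Nat.cast_ne_zero.2 i.factorial_ne_zero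
      have hfi1 : (((i+1).factorial:ℕ):ℝ) ≠ 0 := Nat.cast_ne_zero.2 (i+1).factorial_ne_zero
      simp only [bterm, hterm, e4, e2, e5, show (1-kf)+1 = 2-kf by ring]
      rw [pow_succ, Nat.factorial_succ i]
      push_cast
      field_simp
    have hsum2 : ∑' i, bterm (1-kf) (i+1) * (1-x)^(i+1)
        = ((1-kf)*(1-x)) * hyp2F1 1 (2-kf) 2 (1-x) := by
      rw [hyp2F1_eq_tsum, ← tsum_mul_left]
      exact tsum_congr hterm_eq
    have hmain : x^(kf-1) = 1 + ((1-kf)*(1-x)) * hyp2F1 1 (2-kf) 2 (1-x) := by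
      rw [← hbin, hzero, h0t, hsum2]
    have hP : hyp2F1 (1-kf) (2-(2:ℝ)) (2-kf) x = 1 := by
      rw [hyp2F1_eq_tsum, tsum_eq_single 0 ?_]
      · simp [hterm]
      · intro i hi
        have hz := poch_eq_zero (show 0 < i by omega)
          (show (2-(2:ℝ)) + ((0:ℕ):ℝ) = 0 by norm_num)
        simp only [hterm, hz, mul_zero, zero_mul, zero_div]
    have hGrec : Real.Gamma (2-kf) = (1-kf) * Real.Gamma (1-kf) := by
      rw [show (2:ℝ)-kf = (1-kf)+1 by ring, Real.Gamma_add_one hkf1]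
    have hrp : (1-x) ^ ((1:ℝ)-2) = (1-x)⁻¹ := by
      rw [show (1:ℝ)-2 = -1 by norm_num, Real.rpow_neg_one]
    rw [hP, hrp, hGrec, Real.Gamma_two]
    have hzne : (1:ℝ)-x ≠ 0 := hz0'.ne'
    have hkfm : kf - 1 ≠ 0 := fun h => hkf1 (by linarith)
    have hF2 : hyp2F1 1 (2-kf) 2 (1-x) = (x^(kf-1) - 1)/((1-kf)*(1-x)) := by
      rw [eq_div_iff (mul_ne_zero hkf1 hzne)]
      linarith [hmain]
    rw [hF2]
    field_simp
    ring
  | succ d ih =>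
    set cκ : ℝ := ((d+2:ℕ):ℝ) with hcκ
    have hc3 : ((d+1+2:ℕ):ℝ) = cκ + 1 := by rw [hcκ]; push_cast; ring
    rw [hc3]
    have hcpos : (0:ℝ) < cκ := by rw [hcκ]; positivity
    have hcne : cκ ≠ 0 := hcpos.ne'
    have hb : ∀ i : ℕ, (cκ - kf) + i ≠ 0 := fun i h =>
      hkf (((d:ℤ)+2)+i) (by rw [hcκ] at h; push_cast at h ⊢; linarith)
    have hbne : cκ - kf ≠ 0 := by simpa using hb 0
    have hGcne : Real.Gamma (cκ-kf) ≠ 0 :=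
      Real.Gamma_ne_zero (fun m hm => hkf (((d:ℤ)+2)+m)
        (by rw [hcκ] at hm; push_cast at hm ⊢; linarith))
    have shift := hyp_shift hb hcpos hz0' hz1'
    have heq : ((cκ-kf) * (1-x) / cκ) * hyp2F1 1 ((cκ-kf)+1) (cκ+1) (1-x)
        = (cκ - 1)/(kf - 1) * (1-x) ^ ((1:ℝ) - cκ) * hyp2F1 (1-kf) (2-cκ) (2-kf) x
          + Real.Gamma cκ * Real.Gamma (1-kf) / Real.Gamma (cκ-kf)
            * (1-x) ^ ((1:ℝ)-cκ) * x ^ (kf-1) - 1 := by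
      rw [← ih, shift]
      ring
    rw [show cκ + 1 - kf = (cκ - kf) + 1 by ring]
    -- it suffices to prove the candidate value satisfies the same linear relation
    apply mul_left_cancel₀ (show ((cκ-kf) * (1-x) / cκ) ≠ 0 by
      exact div_ne_zero (mul_ne_zero hbne hz0'.ne') hcne)
    rw [heq]
    -- now prove the algebraic identity
    have hG1 : Real.Gamma (cκ+1) = cκ * Real.Gamma cκ := Real.Gamma_add_one hcne
    have hG2 : Real.Gamma ((cκ-kf)+1) = (cκ-kf) * Real.Gamma (cκ-kf) := Real.Gamma_add_one hbne
    have hpoly := poly_rec (x := x) hkf (d+2) (by omega)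
    rw [show (((d+2:ℕ)):ℝ) = cκ from rfl] at hpoly
    have hzp1 : (1-x) ^ ((1:ℝ)-(cκ+1)) = (1-x) ^ ((1:ℝ)-cκ) / (1-x) := by
      rw [show (1:ℝ)-(cκ+1) = ((1-cκ) - 1) by ring, Real.rpow_sub hz0',
        Real.rpow_one, show (1:ℝ)-cκ = 1-cκ by ring]
    have hzp2 : (1-x) ^ ((1:ℝ)-cκ) * (1-x)^(d+2-1) = 1 := by
      rw [show d+2-1 = d+1 by omega, ← Real.rpow_natCast (1-x) (d+1),
        ← Real.rpow_add hz0']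
      rw [hcκ]
      push_cast
      rw [show (1:ℝ)-((d:ℝ)+2)+((d:ℝ)+1) = 0 by ring, Real.rpow_zero]
    rw [show (2:ℝ) - (cκ+1) = 2 - (cκ+1) from rfl]
    rw [hG1, hzp1]
    rw [show Real.Gamma ((cκ-kf)+1) = (cκ-kf) * Real.Gamma (cκ-kf) from hG2]
    set W := (1-x) ^ ((1:ℝ)-cκ) with hW
    set P' := hyp2F1 (1-kf) (2-(cκ+1)) (2-kf) x with hP'
    set Pκ := hyp2F1 (1-kf) (2-cκ) (2-kf) x with hPκ
    have hkfm : kf - 1 ≠ 0 := fun h => hkf1 (by linarith)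
    have hzne : (1:ℝ)-x ≠ 0 := hz0'.ne'
    linear_combination (norm := skip) (-W/(kf-1)) * hpoly + hzp2
    field_simp
    ring

/-- For positive integers `m < n`, integer `κ ≥ 2` and real `k_f ∉ ℤ`, with `k_g = κ - k_f`:
`₂F₁(1, k_g, κ; 1-m/n) = ((κ-1)/(k_f-1)) (1-m/n)^{1-κ} ₂F₁(1-k_f, 2-κ, 2-k_f; m/n)
  + (Γ(κ)Γ(1-k_f)/Γ(k_g)) (1-m/n)^{1-κ} (m/n)^{k_f-1}`. -/
theorem hypergeometric_connection (m n : ℕ) (hm : 0 < m) (hmn : m < n)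
    (κ : ℕ) (hκ : 2 ≤ κ) (kf : ℝ) (hkf : ∀ j : ℤ, kf ≠ j) :
    hyp2F1 1 ((κ : ℝ) - kf) (κ : ℝ) (1 - (m : ℝ) / n)
      = ((κ : ℝ) - 1) / (kf - 1) * (1 - (m : ℝ) / n) ^ (1 - (κ : ℝ)) *
            hyp2F1 (1 - kf) (2 - (κ : ℝ)) (2 - kf) ((m : ℝ) / n)
        + Real.Gamma (κ : ℝ) * Real.Gamma (1 - kf) / Real.Gamma ((κ : ℝ) - kf) *
            (1 - (m : ℝ) / n) ^ (1 - (κ : ℝ)) * ((m : ℝ) / n) ^ (kf - 1) := by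
  have hn : (0:ℝ) < n := by
    have : 0 < n := lt_trans hm hmn
    exact_mod_cast this
  have hx0 : 0 < (m:ℝ)/n := div_pos (by exact_mod_cast hm) hn
  have hx1 : (m:ℝ)/n < 1 := (div_lt_one hn).2 (by exact_mod_cast hmn)
  exact claim_all hkf hx0 hx1 κ hκ
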